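/- An n-qubit state ψ ∈ ℂ^{2^n} with all amplitudes non-zero is fully separable (a tensor product of n vectors in ℂ²) if and only if it is pair product invariant: for every j ∈ {2,…,n}, writing J = 2^j, the products c_i c_{J−i−1} are equal for all i ∈ {0,…,J/2−1}, where indices are taken modulo the block structure (i.e., the condition holds within the first block of size J, equivalently all blocks by symmetry). -/

import Mathlib

lemma bit_small {e i : ℕ} (hi : i < 2^e) : i / 2^e % 2 = 0 := by
  simp [Nat.div_eq_of_lt hi]

lemma bit_compl {j e i : ℕ} (he : e < j) (hi : i < 2^j) :
    (2 ^ j - 1 - i) / 2 ^ e % 2 = 1 - i / 2 ^ e % 2 := by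
  set A := 2^e with hA
  have hA0 : 0 < A := Nat.pow_pos (by norm_num)
  set q := i / (2*A) with hq
  set r := i % (2*A) with hr
  have hrA : r < 2*A := Nat.mod_lt _ (by omega)
  have hiqr : i = 2*A*q + r := by rw [hq, hr]; exact (Nat.div_add_mod i (2*A)).symm
  set M := 2^(j-e-1) with hM
  have hMj : 2^j = M * (2*A) := by
    rw [hM, hA, ← pow_succ', ← pow_add]; congr 1; omega
  have hM0 : 0 < M := Nat.pow_pos (by norm_num)
  have hqM : q < M := by
    by_contra h
    push_neg at h
    have : M * (2*A) ≤ q * (2*A) := Nat.mul_le_mul_right _ h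
    nlinarith
  have hMj' : (2^j : ℤ) = (M : ℤ) * (2*(A:ℤ)) := by exact_mod_cast hMj
  have hiqr' : (i : ℤ) = 2*(A:ℤ)*(q:ℤ) + (r:ℤ) := by exact_mod_cast hiqr
  have key : 2^j - 1 - i = (M - 1 - q)*(2*A) + (2*A - 1 - r) := by
    zify [Nat.one_le_two_pow, show i ≤ 2^j - 1 by omega,
      show (1:ℕ) ≤ M by omega, show q ≤ M - 1 by omega,
      show (1:ℕ) ≤ 2*A by omega, show r ≤ 2*A - 1 by omega]
    linear_combination hMj' - hiqr'
  rw [key, hiqr]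
  have e1 : ((M - 1 - q)*(2*A) + (2*A - 1 - r)) / A = (M-1-q)*2 + (2*A-1-r)/A := by
    rw [show (M - 1 - q)*(2*A) + (2*A - 1 - r) = A*((M-1-q)*2) + (2*A-1-r) by ring,
      Nat.mul_add_div hA0]
  have e2 : (2*A*q + r) / A = q*2 + r/A := by
    rw [show 2*A*q + r = A*(q*2) + r by ring, Nat.mul_add_div hA0]
  rw [e1, e2]
  rcases Nat.lt_or_ge r A with h | h
  · have h1 : r / A = 0 := Nat.div_eq_of_lt h
    have h2 : (2*A - 1 - r)/A = 1 := by
      rw [show 2*A-1-r = (A-1-r) + A by omega, Nat.add_div_right _ hA0,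
        Nat.div_eq_of_lt (by omega)]
    omega
  · have h1 : r / A = 1 := by
      rw [show r = (r - A) + A by omega, Nat.add_div_right _ hA0,
        Nat.div_eq_of_lt (by omega)]
    have h2 : (2*A - 1 - r)/A = 0 := Nat.div_eq_of_lt (by omega)
    omega

lemma mulv (g : Fin 2 → ℂ) (a b a' b' : Fin 2)
    (h : (a.val = a'.val ∧ b.val = b'.val) ∨ (a.val = b'.val ∧ b.val = a'.val)) :
    g a * g b = g a' * g b' := by
  rcases h with ⟨h1, h2⟩ | ⟨h1, h2⟩
  · rw [show a = a' from Fin.ext h1, show b = b' from Fin.ext h2]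
  · rw [show a = b' from Fin.ext h1, show b = a' from Fin.ext h2, mul_comm]

lemma core (n : ℕ) (hn : 1 ≤ n) : ∀ f : ℕ → ℂ,
    (∀ i, i < 2^n → f i ≠ 0) →
    (∀ j, 2 ≤ j → j ≤ n → ∀ i, i < 2^(j-1) →
      f i * f (2^j - i - 1) = f 0 * f (2^j - 1)) →
    ∃ v : ℕ → ℕ → ℂ, ∀ c, c < 2^n →
      f c = ∏ k ∈ Finset.range n, v k (c / 2^(n-1-k) % 2) := by
  induction n, hn using Nat.le_induction with
  | base =>
    intro f h0 hC
    refine ⟨fun _ b => f b, fun c hc => ?_⟩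
    rw [Finset.prod_range_one]
    norm_num
    rw [Nat.mod_eq_of_lt (by norm_num at hc; omega)]
  | succ m hm IH =>
    intro f h0 hC
    have hpow : 2^m < 2^(m+1) := Nat.pow_lt_pow_succ (by norm_num)
    have h2m1 : 2^(m+1) = 2*2^m := by rw [pow_succ']
    obtain ⟨v', hv'⟩ := IH f (fun i hi => h0 i (by omega))
      (fun j h2 hjm i hi => hC j h2 (by omega) i hi)
    have hv'ne : ∀ i, i < 2^m → f i ≠ 0 := fun i hi => h0 i (by omega)
    have hpair : ∀ p, p < 2^m → f p * f (2^m - 1 - p) = f 0 * f (2^m - 1) := by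
      intro p hp
      rcases eq_or_lt_of_le hm with h1 | h2
    -- m = 1
      · subst h1
        norm_num at hp
        interval_cases p <;> norm_num <;> ring
      · have h2m : 2^m = 2*2^(m-1) := by
          rw [← pow_succ']; congr 1; omega
        rcases Nat.lt_or_ge p (2^(m-1)) with hp1 | hp1
        · have := hC m h2 (by omega) p hp1
          rw [show 2^m - p - 1 = 2^m - 1 - p by omega] at this
          exact this
        · have hi : 2^m - 1 - p < 2^(m-1) := by omega
          have := hC m h2 (by omega) _ hi
          rw [show 2^m - (2^m - 1 - p) - 1 = p by omega] at this
          linear_combination this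
    set w1 := f (2^(m+1) - 1) / f (2^m - 1) with hw1
    refine ⟨fun k b => if k = 0 then (if b = 0 then 1 else w1) else v' (k-1) b,
      fun c hc => ?_⟩
    rw [Finset.prod_range_succ']
    have hexp : ∀ k : ℕ, m + 1 - 1 - (k+1) = m - 1 - k := by omega
    have hexp2 : ∀ k : ℕ, m - (k+1) = m - 1 - k := by omega
    simp only [Nat.succ_ne_zero, if_false, Nat.add_sub_cancel]
    simp only [show m + 1 - 1 - 0 = m by omega, eq_self_iff_true, if_true, Nat.sub_zero]
    have hv2 : ∀ c', c' < 2^m →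
        f c' = ∏ k ∈ Finset.range m, v' k (c' / 2^(m-(k+1)) % 2) :=
      fun c' hc' => (hv' c' hc').trans
        (Finset.prod_congr rfl fun k _ => by rw [show m-1-k = m-(k+1) by omega])
    rcases Nat.lt_or_ge c (2^m) with hcm | hcm
    · have hb0 : c / 2^m % 2 = 0 := bit_small hcm
      rw [if_pos hb0, mul_one]
      exact hv2 c hcm
    · set p := c - 2^m with hp
      have hpm : p < 2^m := by omega
      have hb1 : c / 2^m % 2 = 1 := by
        rw [show c = p + 2^m by omega, Nat.add_div_right _ (by positivity),
          Nat.div_eq_of_lt hpm]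
      rw [if_neg (show ¬ c / 2^m % 2 = 0 by omega)]
      have hbits : ∀ k, k < m → c / 2^(m-(k+1)) % 2 = p / 2^(m-(k+1)) % 2 := by
        intro k hk
        set e := m - (k+1) with he'
        have he : e < m := by omega
        rw [show c = p + 2^(m-e)*2^e by
            rw [← pow_add, show m-e + e = m by omega]; omega,
          Nat.add_mul_div_right _ _ (by positivity),
          show 2^(m-e) = 2^(m-e-1)*2 by
            rw [← pow_succ, show m-e-1+1 = m-e by omega]]
        omega
      rw [Finset.prod_congr rfl (fun k hk => by
        rw [hbits k (Finset.mem_range.mp hk)]), ← hv2 p hpm]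
      -- now goal : f c = f p * w1
      have hi : 2^m - 1 - p < 2^(m+1-1) := by simpa using by omega
      have eq1 := hC (m+1) (by omega) le_rfl _ hi
      rw [show 2^(m+1) - (2^m - 1 - p) - 1 = c by omega] at eq1
      have eq2 := hpair p hpm
      have hne1 : f 0 ≠ 0 := h0 0 (by positivity)
      have hne2 : f (2^m - 1) ≠ 0 := h0 _ (by omega)
      have key : f c * f (2^m - 1) = f (2^(m+1) - 1) * f p :=
        mul_left_cancel₀ hne1 (by linear_combination f p * eq1 - f c * eq2)
      rw [hw1]
      field_simp
      linear_combination key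


/-- An `n`-qubit state with all amplitudes non-zero is fully separable iff it is
pair product invariant: for every `j ∈ {2,…,n}`, with `J = 2^j`, the products
`c_i c_{J-i-1}` agree for all `i < J/2` (within the first block of size `J`). -/
theorem stmt9 (n : ℕ) (hn : 1 ≤ n) (ψ : Fin (2 ^ n) → ℂ) (hψ : ∀ i, ψ i ≠ 0) :
    (∃ v : Fin n → Fin 2 → ℂ, ∀ c : Fin (2 ^ n),
        ψ c = ∏ j : Fin n,
          v j ⟨c.val / 2 ^ (n - 1 - j.val) % 2, Nat.mod_lt _ (by norm_num)⟩) ↔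
    (∀ j, 2 ≤ j → ∀ hj : j ≤ n, ∀ i₁ i₂ : ℕ,
      ∀ h₁ : i₁ < 2 ^ (j - 1), ∀ h₂ : i₂ < 2 ^ (j - 1),
        ψ ⟨i₁, by
            have h := Nat.pow_le_pow_right (by norm_num : 1 ≤ 2) (by omega : j - 1 ≤ n)
            omega⟩ *
          ψ ⟨2 ^ j - i₁ - 1, by
            have h := Nat.pow_le_pow_right (by norm_num : 1 ≤ 2) hj
            have h0 : 0 < 2 ^ j := by positivity
            omega⟩ =
        ψ ⟨i₂, by
            have h := Nat.pow_le_pow_right (by norm_num : 1 ≤ 2) (by omega : j - 1 ≤ n)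
            omega⟩ *
          ψ ⟨2 ^ j - i₂ - 1, by
            have h := Nat.pow_le_pow_right (by norm_num : 1 ≤ 2) hj
            have h0 : 0 < 2 ^ j := by positivity
            omega⟩) := by
  constructor
  · rintro ⟨v, hv⟩ j hj2 hj i₁ i₂ h₁ h₂
    have h2j : 2^j = 2*2^(j-1) := by rw [← pow_succ']; congr 1; omega
    rw [hv, hv, hv, hv, ← Finset.prod_mul_distrib, ← Finset.prod_mul_distrib]
    refine Finset.prod_congr rfl fun k _ => ?_
    apply mulv
    simp only [Fin.val_mk]
    set e := n - 1 - k.val with he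
    rcases Nat.lt_or_ge e j with hej | hej
    · have c1 : (2^j - 1 - i₁) / 2^e % 2 = 1 - i₁ / 2^e % 2 :=
        bit_compl hej (by omega)
      have c2 : (2^j - 1 - i₂) / 2^e % 2 = 1 - i₂ / 2^e % 2 :=
        bit_compl hej (by omega)
      rw [show 2^j - 1 - i₁ = 2^j - i₁ - 1 by omega] at c1
      rw [show 2^j - 1 - i₂ = 2^j - i₂ - 1 by omega] at c2
      have m1 := Nat.mod_two_eq_zero_or_one (i₁ / 2^e)
      have m2 := Nat.mod_two_eq_zero_or_one (i₂ / 2^e)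
      omega
    · have hj2e : 2^j ≤ 2^e := Nat.pow_le_pow_right (by norm_num) hej
      have b1 : i₁ / 2^e % 2 = 0 := bit_small (by omega)
      have b2 : i₂ / 2^e % 2 = 0 := bit_small (by omega)
      have b1' : (2^j - i₁ - 1) / 2^e % 2 = 0 := bit_small (by omega)
      have b2' : (2^j - i₂ - 1) / 2^e % 2 = 0 := bit_small (by omega)
      omega
  · intro hR
    classical
    set f : ℕ → ℂ := fun m => if h : m < 2^n then ψ ⟨m, h⟩ else 1 with hfdef
    have hf : ∀ m (h : m < 2^n), f m = ψ ⟨m, h⟩ := fun m h => dif_pos h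
    have hf0 : ∀ i, i < 2^n → f i ≠ 0 := fun i hi => by rw [hf i hi]; exact hψ _
    have hfC : ∀ j, 2 ≤ j → j ≤ n → ∀ i, i < 2^(j-1) →
        f i * f (2^j - i - 1) = f 0 * f (2^j - 1) := by
      intro j h2 hjn i hi
      have hjpow : 2^j ≤ 2^n := Nat.pow_le_pow_right (by norm_num) hjn
      have hj1pow : 2^(j-1) ≤ 2^n := Nat.pow_le_pow_right (by norm_num) (by omega)
      have h2j : 0 < 2^j := by positivity
      have key := hR j h2 hjn i 0 hi (by positivity)
      rw [hf i (by omega), hf (2^j - i - 1) (by omega), hf 0 (by positivity),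
        hf (2^j - 1) (by omega)]
      convert key using 3
      simp
    obtain ⟨V, hV⟩ := core n hn f hf0 hfC
    refine ⟨fun k b => V k.val b.val, fun c => ?_⟩
    have h1 := hV c.val c.isLt
    rw [hf c.val c.isLt, Fin.eta] at h1
    rw [h1]
    exact (Fin.prod_univ_eq_prod_range
      (fun k => V k (c.val / 2 ^ (n - 1 - k) % 2)) n).symm
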